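/- Let k be a field of characteristic zero. The group G ≤ PGL₄(k) generated by the four matrices g₁ = [[0,-1,0,0],[1,-1,0,0],[0,0,1,0],[0,0,0,1]], g₂ = [[1,0,0,0],[0,1,0,0],[0,0,0,-1],[0,0,1,-1]], g₃ = permutation matrix of (x₀x₂)(x₁x₃) via (x₀:x₁:x₂:x₃) ↦ (x₂:x₃:x₁:x₀), and g₄ = reversal (x₀:x₁:x₂:x₃) ↦ (x₃:x₂:x₁:x₀), is isomorphic to C₃² ⋊ D₈ of order 72. -/

import Mathlib

namespace Stmt11Aux

abbrev M4 := Matrix (Fin 4) (Fin 4) ℤ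

def A : M4 := !![0,-1,0,0; 1,-1,0,0; 0,0,1,0; 0,0,0,1]
def B : M4 := !![1,0,0,0; 0,1,0,0; 0,0,0,-1; 0,0,1,-1]
def C : M4 := !![0,0,1,0; 0,0,0,1; 0,1,0,0; 1,0,0,0]
def D : M4 := !![0,0,0,1; 0,0,1,0; 0,1,0,0; 1,0,0,0]

def aU : GL (Fin 4) ℤ := ⟨A, A*A, by decide, by decide⟩
def bU : GL (Fin 4) ℤ := ⟨B, B*B, by decide, by decide⟩
def cU : GL (Fin 4) ℤ := ⟨C, C*C*C, by decide, by decide⟩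
def dU : GL (Fin 4) ℤ := ⟨D, D, by decide, by decide⟩

abbrev Nn := Multiplicative (ZMod 3 × ZMod 3)

def fNf (p : ZMod 3 × ZMod 3) : GL (Fin 4) ℤ := aU ^ p.1.val * bU ^ p.2.val

def fN : Nn →* GL (Fin 4) ℤ where
  toFun n := fNf n.toAdd
  map_one' := by decide
  map_mul' := by decide

def fDf : DihedralGroup 4 → GL (Fin 4) ℤ
  | .r i => cU ^ i.val
  | .sr i => dU * cU ^ i.val

def fD : DihedralGroup 4 →* GL (Fin 4) ℤ where
  toFun := fDf
  map_one' := by decide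
  map_mul' := by decide

def Raut : (ZMod 3 × ZMod 3) ≃+ (ZMod 3 × ZMod 3) where
  toFun p := (p.2, -p.1)
  invFun p := (-p.2, p.1)
  left_inv := by decide
  right_inv := by decide
  map_add' := by decide

def Saut : (ZMod 3 × ZMod 3) ≃+ (ZMod 3 × ZMod 3) where
  toFun p := (-p.2, -p.1)
  invFun p := (-p.2, -p.1)
  left_inv := by decide
  right_inv := by decide
  map_add' := by decide

def Rm : MulAut Nn := AddEquiv.toMultiplicative Raut
def Sm : MulAut Nn := AddEquiv.toMultiplicative Saut

instance : DecidableEq (MulAut Nn) := fun f g =>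
  decidable_of_iff (∀ x, f x = g x) ⟨fun h => MulEquiv.ext h, fun h x => by rw [h]⟩

def phif : DihedralGroup 4 → MulAut Nn
  | .r i => Rm ^ i.val
  | .sr i => Sm * Rm ^ i.val

def phi : DihedralGroup 4 →* MulAut Nn where
  toFun := phif
  map_one' := by decide
  map_mul' := by decide

lemma compat_key : ∀ (g : DihedralGroup 4) (n : Nn),
    fN (phi g n) = MulAut.conj (fD g) (fN n) := by decide

lemma compat : ∀ g : DihedralGroup 4,
    fN.comp (phi g).toMonoidHom = (MulAut.conj (fD g)).toMonoidHom.comp fN :=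
  fun g => MonoidHom.ext fun n => compat_key g n

def Phi0 : SemidirectProduct Nn (DihedralGroup 4) phi →* GL (Fin 4) ℤ :=
  SemidirectProduct.lift fN fD compat

lemma Phi0_apply (x : SemidirectProduct Nn (DihedralGroup 4) phi) :
    Phi0 x = fNf x.left.toAdd * fDf x.right := by
  calc Phi0 x = Phi0 (SemidirectProduct.inl x.left * SemidirectProduct.inr x.right) := by
        rw [SemidirectProduct.inl_left_mul_inr_right]
    _ = fNf x.left.toAdd * fDf x.right := by
        rw [map_mul, Phi0, SemidirectProduct.lift_inl, SemidirectProduct.lift_inr]; rfl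

lemma nonscalar : ∀ (p : ZMod 3 × ZMod 3) (d : DihedralGroup 4),
    (∃ i j : Fin 4, i ≠ j ∧ ((fNf p * fDf d : GL (Fin 4) ℤ).val i j ≠ 0 ∨
      (fNf p * fDf d : GL (Fin 4) ℤ).val i i ≠ (fNf p * fDf d : GL (Fin 4) ℤ).val j j)) ∨
    (p = 0 ∧ d = 1) := by decide

lemma gen_N : ∀ p : ZMod 3 × ZMod 3, Multiplicative.ofAdd p =
    Multiplicative.ofAdd ((1:ZMod 3),(0:ZMod 3)) ^ p.1.val *
    Multiplicative.ofAdd ((0:ZMod 3),(1:ZMod 3)) ^ p.2.val := by decide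

lemma fN_xg : fN (Multiplicative.ofAdd ((1:ZMod 3),(0:ZMod 3))) = aU := by decide
lemma fN_yg : fN (Multiplicative.ofAdd ((0:ZMod 3),(1:ZMod 3))) = bU := by decide
lemma fD_r1 : fD (DihedralGroup.r 1) = cU := by decide
lemma fD_sr0 : fD (DihedralGroup.sr 0) = dU := by decide

lemma gen_r : ∀ i : ZMod 4, DihedralGroup.r i = (DihedralGroup.r 1) ^ i.val := by decide
lemma gen_sr : ∀ i : ZMod 4,
    DihedralGroup.sr i = DihedralGroup.sr 0 * (DihedralGroup.r 1) ^ i.val := by decide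

def xg : Nn := Multiplicative.ofAdd ((1:ZMod 3),(0:ZMod 3))
def yg : Nn := Multiplicative.ofAdd ((0:ZMod 3),(1:ZMod 3))

open SemidirectProduct in
lemma sdp_top : Subgroup.closure
    {(inl xg : SemidirectProduct Nn (DihedralGroup 4) phi), inl yg,
      inr (DihedralGroup.r 1), inr (DihedralGroup.sr 0)} = ⊤ := by
  rw [eq_top_iff]
  intro z _
  have hmem : ∀ s ∈ ({inl xg, inl yg, inr (DihedralGroup.r 1),
      inr (DihedralGroup.sr 0)} : Set (SemidirectProduct Nn (DihedralGroup 4) phi)),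
      s ∈ Subgroup.closure {(inl xg : SemidirectProduct Nn (DihedralGroup 4) phi), inl yg,
        inr (DihedralGroup.r 1), inr (DihedralGroup.sr 0)} :=
    fun s hs => Subgroup.subset_closure hs
  rw [← SemidirectProduct.inl_left_mul_inr_right z]
  refine mul_mem ?_ ?_
  · have : z.left = xg ^ z.left.toAdd.1.val * yg ^ z.left.toAdd.2.val := by
      have := gen_N z.left.toAdd
      simpa [xg, yg] using this
    rw [this, map_mul, map_pow, map_pow]
    exact mul_mem (pow_mem (hmem _ (by simp)) _) (pow_mem (hmem _ (by simp)) _)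
  · rcases hz : z.right with i | i
    · rw [gen_r i, map_pow]
      exact pow_mem (hmem _ (by simp)) _
    · rw [gen_sr i, map_mul, map_pow]
      exact mul_mem (hmem _ (by simp)) (pow_mem (hmem _ (by simp)) _)

end Stmt11Aux

set_option maxHeartbeats 1000000 in
open Stmt11Aux in
/-- The subgroup of `PGL₄(k)` generated by the images of the four matrices
`g₁ = [[0,-1,0,0],[1,-1,0,0],[0,0,1,0],[0,0,0,1]]`,
`g₂ = [[1,0,0,0],[0,1,0,0],[0,0,0,-1],[0,0,1,-1]]`,
`g₃ : (x₀:x₁:x₂:x₃) ↦ (x₂:x₃:x₁:x₀)` and `g₄ : (x₀:x₁:x₂:x₃) ↦ (x₃:x₂:x₁:x₀)`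
is isomorphic to `C₃² ⋊ D₈`, of order 72. -/
theorem stmt11 (k : Type*) [Field k] [CharZero k]
    (g₁ g₂ g₃ g₄ : GL (Fin 4) k)
    (h₁ : (g₁ : Matrix (Fin 4) (Fin 4) k) =
      !![0, -1, 0, 0; 1, -1, 0, 0; 0, 0, 1, 0; 0, 0, 0, 1])
    (h₂ : (g₂ : Matrix (Fin 4) (Fin 4) k) =
      !![1, 0, 0, 0; 0, 1, 0, 0; 0, 0, 0, -1; 0, 0, 1, -1])
    (h₃ : (g₃ : Matrix (Fin 4) (Fin 4) k) =
      !![0, 0, 1, 0; 0, 0, 0, 1; 0, 1, 0, 0; 1, 0, 0, 0])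
    (h₄ : (g₄ : Matrix (Fin 4) (Fin 4) k) =
      !![0, 0, 0, 1; 0, 0, 1, 0; 0, 1, 0, 0; 1, 0, 0, 0])
    (G : Subgroup (GL (Fin 4) k ⧸ Subgroup.center (GL (Fin 4) k)))
    (hG : G = Subgroup.closure
      {QuotientGroup.mk' (Subgroup.center (GL (Fin 4) k)) g₁,
       QuotientGroup.mk' (Subgroup.center (GL (Fin 4) k)) g₂,
       QuotientGroup.mk' (Subgroup.center (GL (Fin 4) k)) g₃,
       QuotientGroup.mk' (Subgroup.center (GL (Fin 4) k)) g₄}) :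
    (∃ φ : DihedralGroup 4 →* MulAut (Multiplicative (ZMod 3 × ZMod 3)),
      Nonempty (G ≃* SemidirectProduct (Multiplicative (ZMod 3 × ZMod 3))
        (DihedralGroup 4) φ)) ∧
    Nat.card G = 72 := by
  classical
  set π : GL (Fin 4) k →* GL (Fin 4) k ⧸ Subgroup.center (GL (Fin 4) k) :=
    QuotientGroup.mk' (Subgroup.center (GL (Fin 4) k)) with hπ
  let ι : GL (Fin 4) ℤ →* GL (Fin 4) k :=
    Matrix.GeneralLinearGroup.map (Int.castRingHom k)
  let Φ : SemidirectProduct Nn (DihedralGroup 4) phi →*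
      GL (Fin 4) k ⧸ Subgroup.center (GL (Fin 4) k) := π.comp (ι.comp Phi0)
  -- casting matrices
  have hcast : ∀ u : GL (Fin 4) ℤ, (ι u).val = u.val.map (Int.cast : ℤ → k) := by
    intro u; rfl
  -- images of generators
  have hι1 : ι aU = g₁ := by
    apply Units.ext
    rw [hcast, h₁]
    ext i j
    fin_cases i <;> fin_cases j <;> simp [aU, A, Matrix.map_apply, Matrix.vecHead, Matrix.vecTail]
  have hι2 : ι bU = g₂ := by
    apply Units.ext
    rw [hcast, h₂]
    ext i j
    fin_cases i <;> fin_cases j <;> simp [bU, B, Matrix.map_apply, Matrix.vecHead, Matrix.vecTail]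
  have hι3 : ι cU = g₃ := by
    apply Units.ext
    rw [hcast, h₃]
    ext i j
    fin_cases i <;> fin_cases j <;> simp [cU, C, Matrix.map_apply, Matrix.vecHead, Matrix.vecTail]
  have hι4 : ι dU = g₄ := by
    apply Units.ext
    rw [hcast, h₄]
    ext i j
    fin_cases i <;> fin_cases j <;> simp [dU, D, Matrix.map_apply, Matrix.vecHead, Matrix.vecTail]
  -- injectivity
  have hinj : Function.Injective Φ := by
    rw [injective_iff_map_eq_one]
    intro x hx
    have hc : ι (Phi0 x) ∈ Subgroup.center (GL (Fin 4) k) :=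
      (QuotientGroup.eq_one_iff _).mp hx
    have hcomm : ∀ t : Matrix.TransvectionStruct (Fin 4) k,
        Commute t.toMatrix ((ι (Phi0 x)).val) := by
      intro t
      have h := Subgroup.mem_center_iff.mp hc
        ⟨t.toMatrix, t.inv.toMatrix, t.mul_inv, t.inv_mul⟩
      exact congrArg Units.val h
    obtain ⟨r, hr⟩ := Matrix.mem_range_scalar_of_commute_transvectionStruct hcomm
    rcases nonscalar x.left.toAdd x.right with ⟨i, j, hij, hor⟩ | ⟨h1, h2⟩
    · exfalso
      have hval : (ι (Phi0 x)).val =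
          ((fNf x.left.toAdd * fDf x.right : GL (Fin 4) ℤ).val).map (Int.cast : ℤ → k) := by
        rw [hcast, Phi0_apply]
      have hentry : ∀ a b : Fin 4,
          ((((fNf x.left.toAdd * fDf x.right : GL (Fin 4) ℤ).val a b : ℤ) : k)) =
            Matrix.scalar (Fin 4) r a b := by
        intro a b
        rw [← hr] at hval
        have := congrFun (congrFun hval.symm a) b
        simpa [Matrix.map_apply] using this
      rcases hor with hne | hdd
      · have h0 := hentry i j
        rw [Matrix.scalar_apply, Matrix.diagonal_apply_ne _ hij] at h0
        exact hne (by exact_mod_cast h0)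
      · have ha := hentry i i
        have hb := hentry j j
        rw [Matrix.scalar_apply, Matrix.diagonal_apply_eq] at ha hb
        exact hdd (by exact_mod_cast ha.trans hb.symm)
    · apply SemidirectProduct.ext
      · show x.left = 1
        have : x.left.toAdd = 0 := h1
        simpa using congrArg Multiplicative.ofAdd this
      · exact h2
  -- range
  have himg : Φ.range = Subgroup.closure {π g₁, π g₂, π g₃, π g₄} := by
    rw [MonoidHom.range_eq_map, ← sdp_top, MonoidHom.map_closure]
    congr 1
    rw [Set.image_insert_eq, Set.image_insert_eq, Set.image_insert_eq, Set.image_singleton]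
    have e1 : Φ (SemidirectProduct.inl xg) = π g₁ := by
      have : Phi0 (SemidirectProduct.inl xg) = aU := by
        rw [Phi0, SemidirectProduct.lift_inl]; exact fN_xg
      show π (ι (Phi0 (SemidirectProduct.inl xg))) = π g₁
      rw [this, hι1]
    have e2 : Φ (SemidirectProduct.inl yg) = π g₂ := by
      have : Phi0 (SemidirectProduct.inl yg) = bU := by
        rw [Phi0, SemidirectProduct.lift_inl]; exact fN_yg
      show π (ι (Phi0 (SemidirectProduct.inl yg))) = π g₂
      rw [this, hι2]
    have e3 : Φ (SemidirectProduct.inr (DihedralGroup.r 1)) = π g₃ := by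
      have : Phi0 (SemidirectProduct.inr (DihedralGroup.r 1)) = cU := by
        rw [Phi0, SemidirectProduct.lift_inr]; exact fD_r1
      show π (ι (Phi0 (SemidirectProduct.inr (DihedralGroup.r 1)))) = π g₃
      rw [this, hι3]
    have e4 : Φ (SemidirectProduct.inr (DihedralGroup.sr 0)) = π g₄ := by
      have : Phi0 (SemidirectProduct.inr (DihedralGroup.sr 0)) = dU := by
        rw [Phi0, SemidirectProduct.lift_inr]; exact fD_sr0
      show π (ι (Phi0 (SemidirectProduct.inr (DihedralGroup.sr 0)))) = π g₄
      rw [this, hι4]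
    rw [e1, e2, e3, e4]
  have hGr : G = Φ.range := by rw [himg, hG]
  have e : G ≃* SemidirectProduct Nn (DihedralGroup 4) phi :=
    (MulEquiv.subgroupCongr hGr).trans (MonoidHom.ofInjective hinj).symm
  refine ⟨⟨phi, ⟨e⟩⟩, ?_⟩
  have hcard : Nat.card (SemidirectProduct Nn (DihedralGroup 4) phi) = 72 := by
    have e2 : SemidirectProduct Nn (DihedralGroup 4) phi ≃ Nn × DihedralGroup 4 :=
      ⟨fun x => (x.left, x.right), fun p => ⟨p.1, p.2⟩, fun x => rfl, fun p => rfl⟩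
    rw [Nat.card_congr e2, Nat.card_eq_fintype_card]
    decide
  rw [Nat.card_congr e.toEquiv, hcard]
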